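/- Let F = 𝔽_q be a finite field, K = 𝔽_{q^m} a degree-m extension, and G a finite group. Let C ≤ KG be a left FG-submodule of the group algebra KG. Then C is TE-LCD (i.e. C ∩ C^⊥_TE = {0}, where the orthogonal is taken with respect to the trace-Euclidean form) if and only if there exists an FG-linear endomorphism P of KG with P² = P, Im(P) = C, and ⟨P x, y⟩_TE = ⟨x, P y⟩_TE for all x, y ∈ KG (P is self-adjoint with respect to the trace-Euclidean form). -/

import Mathlib

open MonoidAlgebra

/-- The trace-Euclidean form on the group algebra `KG`:
`⟨x,y⟩_TE = Tr_{K/F}(Σ_{g∈G} x_g y_g)`. -/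
noncomputable def TE (F : Type) {K G : Type} [Field F] [Field K] [Algebra F K]
    [Fintype G] (x y : MonoidAlgebra K G) : F :=
  Algebra.trace F K (∑ g : G, x.coeff g * y.coeff g)

/-- The involution of `KG` induced by inversion in `G`:
`(Σ a_g g)* = Σ a_g g⁻¹`, i.e. the coefficient of `g` in `a*` is `a (g⁻¹)`. -/
def starG {K G : Type} [Semiring K] [Group G] (a : MonoidAlgebra K G) : MonoidAlgebra K G :=
  MonoidAlgebra.ofCoeff (Finsupp.equivMapDomain (Equiv.inv G) a.coeff)

/-- The coefficientwise embedding of the group algebra `FG` into `KG`. -/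
noncomputable def fgMap (F K G : Type) [Field F] [Field K] [Algebra F K] [Group G] :
    MonoidAlgebra F G →ₐ[F] MonoidAlgebra K G :=
  MonoidAlgebra.lift F (MonoidAlgebra K G) G (MonoidAlgebra.of K G)

/-- `KG` as a left `FG`-module via the coefficientwise embedding `FG ⊆ KG`
followed by left multiplication. -/
noncomputable instance fgModule (F K G : Type) [Field F] [Field K] [Algebra F K] [Group G] :
    Module (MonoidAlgebra F G) (MonoidAlgebra K G) :=
  Module.compHom _ (fgMap F K G).toRingHom


section Aux

variable (F : Type) {K G : Type} [Field F] [Field K] [Algebra F K] [Group G] [Fintype G]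

omit [Fintype G] in
lemma MA_add_apply (x z : MonoidAlgebra K G) (g : G) : (x + z).coeff g = x.coeff g + z.coeff g := rfl
omit [Fintype G] in
lemma MA_smul_apply (c : F) (x : MonoidAlgebra K G) (g : G) : (c • x).coeff g = c • x.coeff g := rfl
omit [Fintype G] in
lemma MA_zero_apply (g : G) : (0 : MonoidAlgebra K G).coeff g = 0 := rfl

omit [Group G] [Fintype G] in
lemma MA_single_apply [DecidableEq G] (g h : G) (c : K) :
    (MonoidAlgebra.single g c : MonoidAlgebra K G).coeff h = if g = h then c else 0 :=
  Finsupp.single_apply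

lemma TE_add_left (x z y : MonoidAlgebra K G) : TE F (x + z) y = TE F x y + TE F z y := by
  unfold TE
  rw [← map_add]
  congr 1
  rw [← Finset.sum_add_distrib]
  exact Finset.sum_congr rfl fun g _ => by rw [MA_add_apply, add_mul]

lemma TE_add_right (x y z : MonoidAlgebra K G) : TE F x (y + z) = TE F x y + TE F x z := by
  unfold TE
  rw [← map_add]
  congr 1
  rw [← Finset.sum_add_distrib]
  exact Finset.sum_congr rfl fun g _ => by rw [MA_add_apply, mul_add]

lemma TE_zero_left (y : MonoidAlgebra K G) : TE F 0 y = 0 := by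
  unfold TE
  rw [show (∑ g : G, (0 : MonoidAlgebra K G).coeff g * y.coeff g) = 0 from
    Finset.sum_eq_zero fun g _ => by rw [MA_zero_apply, zero_mul], map_zero]

lemma TE_zero_right (x : MonoidAlgebra K G) : TE F x 0 = 0 := by
  unfold TE
  rw [show (∑ g : G, x.coeff g * (0 : MonoidAlgebra K G).coeff g) = 0 from
    Finset.sum_eq_zero fun g _ => by rw [MA_zero_apply, mul_zero], map_zero]

lemma TE_smul_left (c : F) (x y : MonoidAlgebra K G) : TE F (c • x) y = c • TE F x y := by
  unfold TE
  rw [← map_smul, Finset.smul_sum]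
  congr 1
  exact Finset.sum_congr rfl fun g _ => by rw [MA_smul_apply, smul_mul_assoc]

lemma TE_smul_right (c : F) (x y : MonoidAlgebra K G) : TE F x (c • y) = c • TE F x y := by
  unfold TE
  rw [← map_smul, Finset.smul_sum]
  congr 1
  exact Finset.sum_congr rfl fun g _ => by rw [MA_smul_apply, mul_smul_comm]

omit [Group G] in
lemma TE_symm (x y : MonoidAlgebra K G) : TE F x y = TE F y x := by
  unfold TE
  congr 1
  exact Finset.sum_congr rfl fun g _ => mul_comm _ _

/-- The star on `FG`. -/
def starF {F G : Type} [Field F] [Group G] (a : MonoidAlgebra F G) : MonoidAlgebra F G :=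
  MonoidAlgebra.ofCoeff (Finsupp.equivMapDomain (Equiv.inv G) a.coeff)

omit [Fintype G] in
lemma starF_zero : starF (0 : MonoidAlgebra F G) = 0 := congrArg MonoidAlgebra.ofCoeff Finsupp.equivMapDomain_zero

omit [Fintype G] in
lemma starF_add (a b : MonoidAlgebra F G) : starF (a + b) = starF a + starF b :=
  MonoidAlgebra.ext (Finsupp.ext fun _ => rfl)

omit [Fintype G] in
lemma starF_single (g : G) (c : F) :
    starF (MonoidAlgebra.single g c : MonoidAlgebra F G) = MonoidAlgebra.single g⁻¹ c :=
  congrArg MonoidAlgebra.ofCoeff (Finsupp.equivMapDomain_single _ _ _)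

lemma fgMap_single (g : G) (c : F) :
    fgMap F K G (MonoidAlgebra.single g c) = MonoidAlgebra.single g (algebraMap F K c) := by
  classical
  have h1 : fgMap F K G (MonoidAlgebra.single g c) = c • (MonoidAlgebra.of K G g) := by
    show (MonoidAlgebra.lift F (MonoidAlgebra K G) G) (MonoidAlgebra.of K G)
      (MonoidAlgebra.single g c) = _
    rw [MonoidAlgebra.lift_single]
  rw [h1]
  refine MonoidAlgebra.ext (Finsupp.ext fun h => ?_)
  rw [MA_smul_apply]
  show c • (MonoidAlgebra.single g (1 : K) : MonoidAlgebra K G).coeff h = _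
  rw [MA_single_apply, MA_single_apply]
  split
  · rw [Algebra.algebraMap_eq_smul_one]
  · rw [smul_zero]

lemma TE_adjoint (a : MonoidAlgebra F G) (x y : MonoidAlgebra K G) :
    TE F (a • x) y = TE F x (starF a • y) := by
  induction a using MonoidAlgebra.induction_linear with
  | zero => rw [starF_zero, zero_smul, zero_smul, TE_zero_left, TE_zero_right]
  | add f g hf hg =>
      rw [starF_add, add_smul, add_smul, TE_add_left, TE_add_right, hf, hg]
  | single g c =>
      have hs : (MonoidAlgebra.single g c : MonoidAlgebra F G) • x
          = MonoidAlgebra.single g (algebraMap F K c) * x := by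
        show fgMap F K G (MonoidAlgebra.single g c) * x = _
        rw [fgMap_single]
      have hs' : starF (MonoidAlgebra.single g c : MonoidAlgebra F G) • y
          = MonoidAlgebra.single g⁻¹ (algebraMap F K c) * y := by
        rw [starF_single]
        show fgMap F K G (MonoidAlgebra.single g⁻¹ c) * y = _
        rw [fgMap_single]
      rw [hs, hs']
      unfold TE
      refine congrArg _ ?_
      refine (Fintype.sum_equiv (Equiv.mulLeft g)
        (fun h => x.coeff h * (MonoidAlgebra.single g⁻¹ (algebraMap F K c) * y).coeff h)
        (fun h => (MonoidAlgebra.single g (algebraMap F K c) * x).coeff h * y.coeff h)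
        (fun h => ?_)).symm
      simp only [Equiv.coe_mulLeft, MonoidAlgebra.coeff_single_mul_apply, inv_inv,
        inv_mul_cancel_left]
      ring

lemma TE_nondeg [Fintype F] [Fintype K] [FiniteDimensional F K]
    (x : MonoidAlgebra K G) (h : ∀ y, TE F x y = 0) : x = 0 := by
  classical
  refine MonoidAlgebra.ext (Finsupp.ext fun g => ?_)
  rw [MonoidAlgebra.coeff_zero, Finsupp.coe_zero, Pi.zero_apply]
  apply (traceForm_nondegenerate F K).1 (x.coeff g)
  intro c
  have hc := h (MonoidAlgebra.single g c)
  rw [Algebra.traceForm_apply]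
  unfold TE at hc
  rw [show (∑ h : G, x.coeff h * (MonoidAlgebra.single g c : MonoidAlgebra K G).coeff h) = x.coeff g * c from ?_]
    at hc
  · exact hc
  · rw [Finset.sum_eq_single g (fun h _ hne => by
      rw [MA_single_apply, if_neg (Ne.symm hne), mul_zero])
      (fun habs => absurd (Finset.mem_univ g) habs)]
    rw [MA_single_apply, if_pos rfl]

instance tower (F K G : Type) [Field F] [Field K] [Algebra F K] [Group G] :
    IsScalarTower F (MonoidAlgebra F G) (MonoidAlgebra K G) :=
  ⟨fun c a x => by
    show fgMap F K G (c • a) * x = c • (fgMap F K G a * x)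
    rw [map_smul, smul_mul_assoc]⟩

end Aux

/-- A left `FG`-submodule `C` of `KG` is TE-LCD (`C ∩ C^⊥_TE = {0}`) if and only
if `C` is the image of an `FG`-linear projector on `KG` that is self-adjoint
with respect to the trace-Euclidean form. -/
theorem te_lcd_iff_selfadjoint_projector
    (F K G : Type) [Field F] [Fintype F] [Field K] [Fintype K] [Algebra F K]
    [FiniteDimensional F K] [Group G] [Fintype G]
    (C : Submodule (MonoidAlgebra F G) (MonoidAlgebra K G)) :
    ((C : Set (MonoidAlgebra K G)) ∩ {x | ∀ c ∈ C, TE F x c = 0} = {0}) ↔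
    (∃ P : MonoidAlgebra K G →ₗ[MonoidAlgebra F G] MonoidAlgebra K G,
        P ∘ₗ P = P ∧ LinearMap.range P = C ∧
        ∀ x y : MonoidAlgebra K G, TE F (P x) y = TE F x (P y)) := by
  haveI : FiniteDimensional F (MonoidAlgebra K G) :=
    Module.Finite.equiv (MonoidAlgebra.coeffLinearEquiv F (S := K) (M := G)).symm
  constructor
  · intro hC
    have hzero : ∀ x, x ∈ C → (∀ c ∈ C, TE F x c = 0) → x = 0 := by
      intro x hx hperp
      have hmem : x ∈ ((C : Set (MonoidAlgebra K G)) ∩ {x | ∀ c ∈ C, TE F x c = 0}) :=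
        ⟨hx, hperp⟩
      rw [hC] at hmem
      exact hmem
    -- the orthogonal complement as an FG-submodule
    set D : Submodule (MonoidAlgebra F G) (MonoidAlgebra K G) :=
      { carrier := {x | ∀ c ∈ C, TE F x c = 0}
        add_mem' := fun {a b} ha hb c hc => by
          rw [TE_add_left, ha c hc, hb c hc, add_zero]
        zero_mem' := fun c _ => TE_zero_left F c
        smul_mem' := fun a x hx c hc => by
          rw [TE_adjoint]
          exact hx _ (C.smul_mem _ hc) } with hDdef
    have hDmem : ∀ x, x ∈ D ↔ ∀ c ∈ C, TE F x c = 0 := fun x => Iff.rfl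
    set CF : Submodule F (MonoidAlgebra K G) := C.restrictScalars F with hCF
    set DF : Submodule F (MonoidAlgebra K G) := D.restrictScalars F with hDF
    set B : LinearMap.BilinForm F (MonoidAlgebra K G) :=
      LinearMap.mk₂ F (TE F) (TE_add_left F) (TE_smul_left F) (TE_add_right F) (TE_smul_right F)
      with hB
    have hBapply : ∀ x y, B x y = TE F x y := fun _ _ => rfl
    have hrefl : B.IsRefl := by
      intro x y h
      rw [hBapply, TE_symm]
      exact h
    have horth : B.orthogonal CF = DF := by
      ext x
      rw [LinearMap.BilinForm.mem_orthogonal_iff]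
      constructor
      · intro h c hc
        rw [TE_symm]
        exact h c hc
      · intro h n hn
        show B n x = 0
        rw [hBapply, TE_symm]
        exact h n hn
    have hnd : B.Nondegenerate := ⟨fun x hx => TE_nondeg F x fun y => hx y,
        fun y hy => TE_nondeg F y fun x => (TE_symm F y x).trans (hy x)⟩
    have hdisj : Disjoint CF (B.orthogonal CF) := by
      rw [horth, Submodule.disjoint_def]
      intro x hx hx'
      exact hzero x hx hx'
    have hcompl : IsCompl CF (B.orthogonal CF) :=
      (LinearMap.BilinForm.restrict_nondegenerate_iff_isCompl_orthogonal hrefl).mp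
        (B.nondegenerate_restrict_of_disjoint_orthogonal hrefl hdisj)
    rw [horth] at hcompl
    set p0 : MonoidAlgebra K G →ₗ[F] MonoidAlgebra K G :=
      CF.subtype ∘ₗ CF.linearProjOfIsCompl DF hcompl with hp0
    have hmemC : ∀ x, p0 x ∈ C := fun x => (CF.linearProjOfIsCompl DF hcompl x).2
    have hleft : ∀ x, x ∈ C → p0 x = x := fun x hx =>
      congrArg Subtype.val (Submodule.linearProjOfIsCompl_apply_left hcompl ⟨x, hx⟩)
    have hright : ∀ x, x ∈ D → p0 x = 0 := fun x hx =>
      congrArg Subtype.val (Submodule.linearProjOfIsCompl_apply_right hcompl ⟨x, hx⟩)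
    have hproj : ∀ y z, y ∈ C → z ∈ D → p0 (y + z) = y := by
      intro y z hy hz
      rw [map_add, hleft y hy, hright z hz, add_zero]
    have hdecomp : ∀ x : MonoidAlgebra K G, ∃ y ∈ C, ∃ z ∈ D, y + z = x := by
      intro x
      have hx : x ∈ CF ⊔ DF := by rw [hcompl.sup_eq_top]; trivial
      obtain ⟨y, hy, z, hz, h⟩ := Submodule.mem_sup.mp hx
      exact ⟨y, hy, z, hz, h⟩
    refine ⟨{ toFun := p0, map_add' := p0.map_add, map_smul' := ?_ }, ?_, ?_, ?_⟩
    · intro a x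
      obtain ⟨y, hy, z, hz, rfl⟩ := hdecomp x
      show p0 (a • (y + z)) = a • p0 (y + z)
      rw [smul_add, hproj y z hy hz, hproj (a • y) (a • z) (C.smul_mem a hy) (D.smul_mem a hz)]
    · refine LinearMap.ext fun x => ?_
      show p0 (p0 x) = p0 x
      exact hleft _ (hmemC x)
    · ext x
      rw [LinearMap.mem_range]
      constructor
      · rintro ⟨z, rfl⟩
        exact hmemC z
      · intro hx
        exact ⟨x, hleft x hx⟩
    · intro x y
      obtain ⟨a, ha, b, hb, rfl⟩ := hdecomp x
      obtain ⟨c, hc, d, hd, rfl⟩ := hdecomp y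
      show TE F (p0 (a + b)) (c + d) = TE F (a + b) (p0 (c + d))
      rw [hproj a b ha hb, hproj c d hc hd, TE_add_right, TE_add_left]
      have h1 : TE F a d = 0 := by rw [TE_symm]; exact hd a ha
      have h2 : TE F b c = 0 := hb c hc
      rw [h1, h2, add_zero]
  · rintro ⟨P, hPP, hrange, hadj⟩
    ext x
    simp only [Set.mem_inter_iff, Set.mem_singleton_iff, SetLike.mem_coe, Set.mem_setOf_eq]
    constructor
    · rintro ⟨hxC, hxperp⟩
      have hx' : x ∈ LinearMap.range P := by rw [hrange]; exact hxC
      obtain ⟨z, hz⟩ := hx'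
      have hPx : P x = x := by
        rw [← hz]
        show P (P z) = P z
        rw [← LinearMap.comp_apply, hPP]
      apply TE_nondeg F
      intro w
      have h1 : TE F (P x) w = TE F x (P w) := hadj x w
      rw [hPx] at h1
      rw [h1]
      have hPw : P w ∈ C := by rw [← hrange]; exact ⟨w, rfl⟩
      exact hxperp (P w) hPw
    · rintro rfl
      exact ⟨C.zero_mem, fun c _ => TE_zero_left F c⟩
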